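/- arXiv:2007.02126 — 2 statements merged into one kernel-verified Lean document; each statement's English description precedes it below -/
import Mathlib

section
/- For real numbers μ1, μ2 and positive reals σ1, σ2, the Kullback–Leibler divergence between the Gaussian distributions N(μ1, σ1²) and N(μ2, σ2²) equals log(σ2/σ1) + (σ1² + (μ1 − μ2)²)/(2σ2²) − 1/2. -/
open MeasureTheory Real

/-- Density of the Gaussian distribution with mean `μ` and standard deviation `σ`. -/
noncomputable def gaussianPdf (μ σ x : ℝ) : ℝ :=
  (1 / (σ * Real.sqrt (2 * Real.pi))) * Real.exp (-(x - μ)^2 / (2 * σ^2))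

/-- KL divergence between two Gaussians, as an integral. -/
noncomputable def klGaussian (μ₁ σ₁ μ₂ σ₂ : ℝ) : ℝ :=
  ∫ x : ℝ, gaussianPdf μ₁ σ₁ x * Real.log (gaussianPdf μ₁ σ₁ x / gaussianPdf μ₂ σ₂ x)

lemma rpow_two_eq (x : ℝ) : x ^ (2:ℝ) = x ^ 2 := by
  rw [show (2:ℝ) = ((2:ℕ):ℝ) by norm_num, Real.rpow_natCast]

lemma integrable_sq_mul_exp {b : ℝ} (hb : 0 < b) :
    Integrable (fun x : ℝ => x ^ 2 * Real.exp (-b * x ^ 2)) := by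
  have h := integrable_rpow_mul_exp_neg_mul_sq hb (s := 2) (by norm_num)
  simpa only [rpow_two_eq] using h

lemma integral_mul_exp_zero {b : ℝ} (hb : 0 < b) :
    ∫ x : ℝ, x * Real.exp (-b * x ^ 2) = 0 := by
  have h := MeasureTheory.integral_neg_eq_self (fun x : ℝ => x * Real.exp (-b * x ^ 2))
    (volume : Measure ℝ)
  simp only [neg_sq] at h
  have h2 : ∫ x : ℝ, -x * Real.exp (-b * x ^ 2) = -∫ x : ℝ, x * Real.exp (-b * x ^ 2) := by
    simp_rw [neg_mul]
    exact integral_neg _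
  rw [h2] at h
  linarith

lemma integral_sq_mul_exp {b : ℝ} (hb : 0 < b) :
    ∫ x : ℝ, x ^ 2 * Real.exp (-b * x ^ 2) = Real.sqrt (Real.pi / b) / (2 * b) := by
  have hint := integrable_sq_mul_exp hb
  have heven : ∀ x : ℝ, (-x) ^ 2 * Real.exp (-b * (-x) ^ 2) = x ^ 2 * Real.exp (-b * x ^ 2) := by
    intro x; rw [neg_sq]
  -- split ℝ into Iic 0 and Ioi 0
  have hsplit : (∫ x in Set.Iic (0:ℝ), x ^ 2 * Real.exp (-b * x ^ 2)) +
      (∫ x in Set.Ioi (0:ℝ), x ^ 2 * Real.exp (-b * x ^ 2)) =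
      ∫ x : ℝ, x ^ 2 * Real.exp (-b * x ^ 2) :=
    intervalIntegral.integral_Iic_add_Ioi hint.integrableOn hint.integrableOn
  have hneg : (∫ x in Set.Ioi (0:ℝ), x ^ 2 * Real.exp (-b * x ^ 2)) =
      ∫ x in Set.Iic (0:ℝ), x ^ 2 * Real.exp (-b * x ^ 2) := by
    have := integral_comp_neg_Ioi (c := 0) (fun x : ℝ => x ^ 2 * Real.exp (-b * x ^ 2))
    simp only [neg_sq, neg_zero] at this
    exact this
  have hIoi : (∫ x in Set.Ioi (0:ℝ), x ^ 2 * Real.exp (-b * x ^ 2)) =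
      b ^ (-(3:ℝ)/2) * (1/2) * Real.Gamma (3/2) := by
    have h := integral_rpow_mul_exp_neg_mul_rpow (p := 2) (q := 2) (b := b)
      (by norm_num) (by norm_num) hb
    have hconv : ∀ x ∈ Set.Ioi (0:ℝ), x ^ (2:ℝ) * Real.exp (-b * x ^ (2:ℝ)) =
        x ^ 2 * Real.exp (-b * x ^ 2) := by
      intro x _; rw [rpow_two_eq]
    rw [setIntegral_congr_fun measurableSet_Ioi hconv] at h
    rw [h]
    norm_num
  have hGamma : Real.Gamma (3/2) = Real.sqrt Real.pi / 2 := by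
    have h1 : (3/2 : ℝ) = 1/2 + 1 := by norm_num
    rw [h1, Real.Gamma_add_one (by norm_num), Real.Gamma_one_half_eq]
    ring
  have h1 : b ^ (-(3:ℝ)/2) = (Real.sqrt b)⁻¹ * b⁻¹ := by
    rw [show (-(3:ℝ)/2) = (-(1/2)) + (-1) by norm_num, Real.rpow_add hb, Real.rpow_neg_one,
      Real.rpow_neg hb.le, ← Real.sqrt_eq_rpow]
  have hsb : (0:ℝ) < Real.sqrt b := Real.sqrt_pos.mpr hb
  rw [← hsplit, ← hneg, hIoi, hGamma, Real.sqrt_div Real.pi_pos.le, h1]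
  field_simp
  ring

/-- Integral of a Gaussian pdf times a quadratic polynomial in `x - μ`. -/
lemma gaussianPdf_poly_integral (μ σ c₀ c₁ c₂ : ℝ) (hσ : 0 < σ) :
    ∫ x : ℝ, gaussianPdf μ σ x * (c₀ + c₁ * (x - μ) + c₂ * (x - μ)^2) = c₀ + c₂ * σ^2 := by
  set b : ℝ := 1 / (2 * σ^2) with hb_def
  have hb : 0 < b := by positivity
  set C : ℝ := 1 / (σ * Real.sqrt (2 * Real.pi)) with hC_def
  have hpdf : ∀ x : ℝ, gaussianPdf μ σ x * (c₀ + c₁ * (x - μ) + c₂ * (x - μ)^2) =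
      (fun y : ℝ => C * (Real.exp (-b * y^2) * (c₀ + c₁ * y + c₂ * y^2))) (x - μ) := by
    intro x
    simp only [gaussianPdf, hC_def, hb_def]
    have : -(x - μ)^2 / (2 * σ^2) = -(1 / (2 * σ^2)) * (x - μ)^2 := by
      field_simp
    rw [this]
    ring
  rw [integral_congr_ae (Filter.Eventually.of_forall hpdf)]
  rw [integral_sub_right_eq_self (fun y : ℝ => C * (Real.exp (-b * y^2) * (c₀ + c₁ * y + c₂ * y^2))) μ]
  rw [integral_const_mul]
  have hsum : ∀ y : ℝ, Real.exp (-b * y^2) * (c₀ + c₁ * y + c₂ * y^2) =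
      c₀ * Real.exp (-b * y^2) + c₁ * (y * Real.exp (-b * y^2)) + c₂ * (y^2 * Real.exp (-b * y^2)) := by
    intro y; ring
  simp_rw [hsum]
  have i0 : Integrable (fun y : ℝ => Real.exp (-b * y^2)) := integrable_exp_neg_mul_sq hb
  have i1 : Integrable (fun y : ℝ => y * Real.exp (-b * y^2)) := integrable_mul_exp_neg_mul_sq hb
  have i2 : Integrable (fun y : ℝ => y^2 * Real.exp (-b * y^2)) := integrable_sq_mul_exp hb
  have e1 := integral_add (μ := volume) ((i0.const_mul c₀).add (i1.const_mul c₁)) (i2.const_mul c₂)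
  have e2 := integral_add (μ := volume) (i0.const_mul c₀) (i1.const_mul c₁)
  simp only [Pi.add_apply] at e1 e2
  rw [e1, e2, integral_const_mul, integral_const_mul, integral_const_mul,
    integral_gaussian, integral_mul_exp_zero hb, integral_sq_mul_exp hb]
  have hsq : Real.sqrt (Real.pi / b) = σ * Real.sqrt (2 * Real.pi) := by
    have : Real.pi / b = σ^2 * (2 * Real.pi) := by
      rw [hb_def]; field_simp
    rw [this, Real.sqrt_mul (by positivity), Real.sqrt_sq hσ.le]
  have hbinv : 1 / (2 * b) = σ^2 := by
    rw [hb_def]; field_simp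
  have hC : C * (σ * Real.sqrt (2 * Real.pi)) = 1 := by
    rw [hC_def]
    have hs : Real.sqrt (2 * Real.pi) ≠ 0 := by positivity
    field_simp
  rw [hsq]
  have expand : C * (c₀ * (σ * Real.sqrt (2 * Real.pi)) + c₁ * 0 +
      c₂ * (σ * Real.sqrt (2 * Real.pi) / (2 * b))) =
      (C * (σ * Real.sqrt (2 * Real.pi))) * (c₀ + c₂ * (1 / (2*b))) := by
    ring
  rw [expand, hC, hbinv]
  ring

theorem kl_gaussian_eq (μ₁ μ₂ σ₁ σ₂ : ℝ) (hσ₁ : 0 < σ₁) (hσ₂ : 0 < σ₂) :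
    klGaussian μ₁ σ₁ μ₂ σ₂ =
      Real.log (σ₂ / σ₁) + (σ₁^2 + (μ₁ - μ₂)^2) / (2 * σ₂^2) - 1/2 := by
  have hs : (0:ℝ) < Real.sqrt (2 * Real.pi) := Real.sqrt_pos.mpr (by positivity)
  set c₀ : ℝ := Real.log (σ₂ / σ₁) + (μ₁ - μ₂)^2 / (2 * σ₂^2) with hc₀
  set c₁ : ℝ := (μ₁ - μ₂) / σ₂^2 with hc₁
  set c₂ : ℝ := 1 / (2 * σ₂^2) - 1 / (2 * σ₁^2) with hc₂
  have key : ∀ x : ℝ,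
      gaussianPdf μ₁ σ₁ x * Real.log (gaussianPdf μ₁ σ₁ x / gaussianPdf μ₂ σ₂ x) =
      gaussianPdf μ₁ σ₁ x * (c₀ + c₁ * (x - μ₁) + c₂ * (x - μ₁)^2) := by
    intro x
    have hratio : gaussianPdf μ₁ σ₁ x / gaussianPdf μ₂ σ₂ x =
        (σ₂ / σ₁) * Real.exp (-(x - μ₁)^2 / (2 * σ₁^2) - -(x - μ₂)^2 / (2 * σ₂^2)) := by
      unfold gaussianPdf
      rw [mul_div_mul_comm, ← Real.exp_sub]
      congr 1
      field_simp
    rw [hratio, Real.log_mul (by positivity) (Real.exp_ne_zero _), Real.log_exp]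
    have halg : Real.log (σ₂ / σ₁) + (-(x - μ₁)^2 / (2 * σ₁^2) - -(x - μ₂)^2 / (2 * σ₂^2)) =
        c₀ + c₁ * (x - μ₁) + c₂ * (x - μ₁)^2 := by
      rw [hc₀, hc₁, hc₂]
      field_simp
      ring
    rw [halg]
  unfold klGaussian
  rw [integral_congr_ae (Filter.Eventually.of_forall key),
    gaussianPdf_poly_integral μ₁ σ₁ c₀ c₁ c₂ hσ₁, hc₀, hc₂]
  field_simp
  ring
end

section
/- Let μ < 1/2 and σ > 0, and set l = 2σ²/(1 − 2μ) > 0. Define f(x) = log σ − (1/2) log(x(1−x)) + (x(1−x) + (x−μ)²)/(2σ²) − 1/2 for x ∈ (0,1) (this is KL(N(x, x(1−x)) || N(μ, σ²))). Then f attains its minimum on (0,1) at x* = (1 + l − √(1 + l²))/2. -/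
open Real

theorem kl_min_attained (μ σ : ℝ) (hμ : μ < 1/2) (hσ : 0 < σ) :
    let l : ℝ := 2 * σ^2 / (1 - 2 * μ)
    let xstar : ℝ := (1 + l - Real.sqrt (1 + l^2)) / 2
    let f : ℝ → ℝ := fun x =>
      Real.log σ - (1/2) * Real.log (x * (1 - x))
        + (x * (1 - x) + (x - μ)^2) / (2 * σ^2) - 1/2
    xstar ∈ Set.Ioo (0:ℝ) 1 ∧ ∀ x ∈ Set.Ioo (0:ℝ) 1, f xstar ≤ f x := by
  intro l xstar f
  have hμ' : (0:ℝ) < 1 - 2*μ := by linarith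
  have hld : l = 2 * σ^2 / (1 - 2 * μ) := rfl
  have hl : 0 < l := by rw [hld]; positivity
  have hll : l * (1 - 2*μ) = 2*σ^2 := by
    rw [hld]; field_simp
  set s := Real.sqrt (1 + l^2) with hs_def
  have hs0 : 0 ≤ s := Real.sqrt_nonneg _
  have hs2 : s^2 = 1 + l^2 := Real.sq_sqrt (by positivity)
  have hxs : xstar = (1 + l - s) / 2 := rfl
  have hx0 : 0 < xstar := by
    have hlt : s < 1 + l := by
      rw [hs_def, show (1:ℝ) + l = Real.sqrt ((1+l)^2) from (Real.sqrt_sq (by positivity)).symm]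
      apply Real.sqrt_lt_sqrt (by positivity)
      nlinarith
    rw [hxs]; linarith
  have hx1 : xstar < 1 := by
    have hspos : 0 < s := by
      rw [hs_def]; exact Real.sqrt_pos.mpr (by positivity)
    have hlt : l - 1 < s := by
      rcases le_or_gt l 1 with h | h
      · linarith
      · nlinarith
    rw [hxs]; linarith
  have hq : xstar^2 - (1+l)*xstar + l/2 = 0 := by
    rw [hxs]; linear_combination hs2 / 4
  have ht0 : l * (1 - 2*xstar) = 2 * (xstar * (1-xstar)) := by
    linear_combination 2*hq
  have ht0pos : 0 < xstar * (1-xstar) := mul_pos hx0 (by linarith)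
  refine ⟨⟨hx0, hx1⟩, ?_⟩
  intro x hx
  obtain ⟨hx0' , hx1'⟩ := hx
  have ht : 0 < x * (1-x) := mul_pos hx0' (by linarith)
  have hfd : ∀ y : ℝ, f y = Real.log σ - (1/2) * Real.log (y * (1 - y))
        + (y * (1 - y) + (y - μ)^2) / (2 * σ^2) - 1/2 := fun _ => rfl
  have hlog : Real.log (x*(1-x)) - Real.log (xstar*(1-xstar))
      ≤ (x*(1-x))/(xstar*(1-xstar)) - 1 := by
    rw [← Real.log_div (ne_of_gt ht) (ne_of_gt ht0pos)]
    exact Real.log_le_sub_one_of_pos (div_pos ht ht0pos)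
  have heq : (x*(1-x))/(xstar*(1-xstar)) - 1
      = (x*(1-x) - xstar*(1-xstar))/(xstar*(1-xstar)) := by
    rw [div_sub_one (ne_of_gt ht0pos)]
  have hfinal : (x*(1-x) - xstar*(1-xstar))/(xstar*(1-xstar)) ≤ 2*((x - xstar)/l) := by
    rw [mul_div_assoc', div_le_div_iff₀ ht0pos hl]
    nlinarith [mul_nonneg hl.le (sq_nonneg (x - xstar)), ht0]
  have hD : (x * (1 - x) + (x - μ)^2) / (2 * σ^2)
      - (xstar * (1 - xstar) + (xstar - μ)^2) / (2 * σ^2) = (x - xstar)/l := by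
    rw [div_sub_div_same, div_eq_div_iff (by positivity) hl.ne']
    linear_combination (x - xstar) * hll
  rw [hfd x, hfd xstar]
  linarith [hlog, heq, hfinal, hD]
end
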